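/- arXiv:0809.2258 — 2 statements merged into one kernel-verified Lean document; each statement's English description precedes it below -/
import Mathlib

section
/- For all 0<q<1 and every integer n≥2, writing H=⌊n/2⌋, the offset satisfies b_n(q) ≥ 2κ(q)·Σ_{k=0}^{H−1}(λ_k(q) − κ(q)); consequently the limit b(q)=lim_{n→∞} b_n(q) satisfies b(q) ≥ 2κ(q)·Σ_{k=0}^{∞}(λ_k(q) − κ(q)). -/
/-- Partial product of the Euler function: `λ_k(q) = ∏_{i=1}^k (1 - q^i)`, with `λ_0(q) = 1`. -/
noncomputable def eulerLam (q : ℝ) (k : ℕ) : ℝ := ∏ i ∈ Finset.range k, (1 - q ^ (i + 1))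

/-- The Euler function `κ(q) = ∏_{i=1}^∞ (1 - q^i)`. -/
noncomputable def eulerKappa (q : ℝ) : ℝ := ∏' i : ℕ, (1 - q ^ (i + 1))

/-- The tail product `μ_n(q) = ∏_{i=n}^∞ (1 - q^i)`. -/
noncomputable def eulerMu (q : ℝ) (n : ℕ) : ℝ := ∏' i : ℕ, (1 - q ^ (n + i))

/-- The offset `b_n(q) = Σ_{k=1}^n λ_{k-1}(q) λ_{n-k}(q) - n κ(q)²`, the expected number of
posts in a random graph order on `n` elements minus `n κ(q)²`. -/
noncomputable def postOffset (q : ℝ) (n : ℕ) : ℝ :=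
  (∑ k ∈ Finset.Icc 1 n, eulerLam q (k - 1) * eulerLam q (n - k)) - n * eulerKappa q ^ 2

open Filter Finset

variable {q : ℝ}

lemma factor_pos (hq0 : 0 < q) (hq1 : q < 1) (i : ℕ) : 0 < 1 - q ^ (i + 1) := by
  have := pow_lt_one₀ hq0.le hq1 (i.succ_ne_zero)
  simpa using this

lemma lam_pos (hq0 : 0 < q) (hq1 : q < 1) (k : ℕ) : 0 < eulerLam q k :=
  Finset.prod_pos fun i _ => factor_pos hq0 hq1 i

lemma lam_le_one (hq0 : 0 < q) (hq1 : q < 1) (k : ℕ) : eulerLam q k ≤ 1 :=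
  Finset.prod_le_one (fun i _ => (factor_pos hq0 hq1 i).le)
    (fun i _ => by have := pow_pos hq0 (i + 1); linarith)

lemma lam_succ (q : ℝ) (k : ℕ) : eulerLam q (k + 1) = eulerLam q k * (1 - q ^ (k + 1)) :=
  Finset.prod_range_succ _ _

lemma lam_anti (hq0 : 0 < q) (hq1 : q < 1) : Antitone (eulerLam q) := by
  apply antitone_nat_of_succ_le
  intro k
  rw [lam_succ]
  have h1 := lam_pos hq0 hq1 k
  have h2 := pow_pos hq0 (k + 1)
  nlinarith

lemma summable_log (hq0 : 0 < q) (hq1 : q < 1) :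
    Summable fun n : ℕ => Real.log (1 - q ^ (n + 1)) := by
  have hg : Summable (fun n : ℕ => q ^ (n + 1) / (1 - q)) := by
    apply Summable.congr ((summable_geometric_of_lt_one hq0.le hq1).mul_left (q / (1 - q)))
    intro n
    rw [pow_succ]
    ring
  refine Summable.of_abs (Summable.of_nonneg_of_le (fun n => abs_nonneg _) (fun n => ?_) hg)
  · 
    have hf := factor_pos hq0 hq1 n
    have hp := pow_pos hq0 (n + 1)
    have hq : q ^ (n + 1) ≤ q := by
      calc q ^ (n + 1) ≤ q ^ 1 := pow_le_pow_of_le_one hq0.le hq1.le (by omega)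
        _ = q := pow_one q
    rw [abs_of_nonpos (Real.log_nonpos (by linarith) (by linarith)), ← Real.log_inv]
    have hlog := Real.log_le_sub_one_of_pos (inv_pos.2 hf)
    have : (1 - q ^ (n + 1))⁻¹ - 1 ≤ q ^ (n + 1) / (1 - q) := by
      rw [inv_eq_one_div, div_sub' (ne_of_gt hf), div_le_div_iff₀ hf (by linarith)]
      nlinarith
    linarith

lemma multipliable (hq0 : 0 < q) (hq1 : q < 1) :
    Multipliable fun i : ℕ => 1 - q ^ (i + 1) := by
  exact Real.multipliable_of_summable_log
    (fun i => factor_pos hq0 hq1 i) (summable_log hq0 hq1)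

lemma tendsto_lam (hq0 : 0 < q) (hq1 : q < 1) :
    Tendsto (eulerLam q) atTop (nhds (eulerKappa q)) :=
  (multipliable hq0 hq1).hasProd.tendsto_prod_nat

lemma kappa_le_lam (hq0 : 0 < q) (hq1 : q < 1) (k : ℕ) : eulerKappa q ≤ eulerLam q k :=
  le_of_tendsto (tendsto_lam hq0 hq1)
    (eventually_atTop.2 ⟨k, fun m hm => lam_anti hq0 hq1 hm⟩)

lemma kappa_nonneg (hq0 : 0 < q) (hq1 : q < 1) : 0 ≤ eulerKappa q :=
  ge_of_tendsto (tendsto_lam hq0 hq1)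
    (Eventually.of_forall fun m => (lam_pos hq0 hq1 m).le)

lemma lam_sub_lam_le (hq0 : 0 < q) (hq1 : q < 1) (k m : ℕ) :
    eulerLam q k - eulerLam q (k + m) ≤ q ^ (k + 1) / (1 - q) := by
  have hgeom : ∑ j ∈ range m, q ^ (k + 1 + j) ≤ q ^ (k + 1) / (1 - q) := by
    have h1 : ∑ j ∈ range m, q ^ (k + 1 + j) = q ^ (k + 1) * ∑ j ∈ range m, q ^ j := by
      rw [Finset.mul_sum]; exact Finset.sum_congr rfl fun j _ => by rw [pow_add]
    have h2 : ∑ j ∈ range m, q ^ j ≤ (1 - q)⁻¹ := by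
      rw [← tsum_geometric_of_lt_one hq0.le hq1]
      exact (summable_geometric_of_lt_one hq0.le hq1).sum_le_tsum _
        (fun i _ => (pow_pos hq0 i).le)
    rw [h1, div_eq_mul_inv]
    exact mul_le_mul_of_nonneg_left h2 (pow_pos hq0 (k + 1)).le
  refine le_trans ?_ hgeom
  clear hgeom
  induction m with
  | zero => simp
  | succ m ih =>
    rw [Finset.sum_range_succ, ← Nat.add_assoc, lam_succ]
    have h1 := lam_pos hq0 hq1 (k + m)
    have h2 := lam_le_one hq0 hq1 (k + m)
    have h3 := pow_pos hq0 (k + 1 + m)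
    have heq : k + m + 1 = k + 1 + m := by omega
    have hstep : eulerLam q (k + m) * q ^ (k + m + 1) ≤ q ^ (k + 1 + m) := by
      rw [heq]
      nlinarith
    nlinarith

lemma lam_sub_kappa_le (hq0 : 0 < q) (hq1 : q < 1) (k : ℕ) :
    eulerLam q k - eulerKappa q ≤ q ^ (k + 1) / (1 - q) := by
  have ht : Tendsto (fun m => eulerLam q k - eulerLam q (k + m)) atTop
      (nhds (eulerLam q k - eulerKappa q)) := by
    apply Tendsto.sub tendsto_const_nhds
    have : Tendsto (fun m : ℕ => k + m) atTop atTop :=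
      tendsto_atTop_atTop.2 fun b => ⟨b, fun n hn => by omega⟩
    exact (tendsto_lam hq0 hq1).comp this
  exact le_of_tendsto ht (Eventually.of_forall fun m => lam_sub_lam_le hq0 hq1 k m)

lemma summable_lam_sub (hq0 : 0 < q) (hq1 : q < 1) :
    Summable fun k : ℕ => eulerLam q k - eulerKappa q := by
  apply Summable.of_nonneg_of_le
    (fun k => sub_nonneg.2 (kappa_le_lam hq0 hq1 k))
    (fun k => lam_sub_kappa_le hq0 hq1 k)
  apply Summable.congr ((summable_geometric_of_lt_one hq0.le hq1).mul_left (q / (1 - q)))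
  intro n
  rw [pow_succ]
  ring
lemma part1 (hq0 : 0 < q) (hq1 : q < 1) (n : ℕ) (hn : 2 ≤ n) :
    2 * eulerKappa q * ∑ k ∈ Finset.range (n / 2), (eulerLam q k - eulerKappa q) ≤
      postOffset q n := by
  set κ := eulerKappa q with hκ
  have hκ0 : 0 ≤ κ := kappa_nonneg hq0 hq1
  -- rewrite postOffset as a sum of differences
  have hpo : postOffset q n =
      ∑ k ∈ Finset.Icc 1 n, (eulerLam q (k - 1) * eulerLam q (n - k) - κ ^ 2) := by
    rw [postOffset, Finset.sum_sub_distrib, Finset.sum_const, Nat.card_Icc]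
    simp [nsmul_eq_mul, hκ]
  have key : ∀ k ∈ Finset.Icc 1 n,
      κ * (eulerLam q (k - 1) - κ) + κ * (eulerLam q (n - k) - κ) ≤
        eulerLam q (k - 1) * eulerLam q (n - k) - κ ^ 2 := by
    intro k _
    have h1 := kappa_le_lam hq0 hq1 (k - 1)
    have h2 := kappa_le_lam hq0 hq1 (n - k)
    nlinarith [mul_nonneg (sub_nonneg.2 h1) (sub_nonneg.2 h2)]
  have hsum1 : ∑ k ∈ Finset.Icc 1 n, κ * (eulerLam q (k - 1) - κ) =
      ∑ j ∈ Finset.range n, κ * (eulerLam q j - κ) := by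
    rw [← Finset.Ico_add_one_right_eq_Icc, Finset.sum_Ico_eq_sum_range]
    simp
  have hsum2 : ∑ k ∈ Finset.Icc 1 n, κ * (eulerLam q (n - k) - κ) =
      ∑ j ∈ Finset.range n, κ * (eulerLam q j - κ) := by
    rw [← Finset.Ico_add_one_right_eq_Icc, Finset.sum_Ico_eq_sum_range]
    have : ∀ i ∈ Finset.range (n + 1 - 1), κ * (eulerLam q (n - (1 + i)) - κ)
        = κ * (eulerLam q (n - 1 - i) - κ) := by
      intro i _
      have h : n - (1 + i) = n - 1 - i := by omega
      rw [h]
    rw [Finset.sum_congr rfl this]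
    simpa using Finset.sum_range_reflect (fun j => κ * (eulerLam q j - κ)) n
  have step1 : 2 * κ * ∑ k ∈ Finset.range (n / 2), (eulerLam q k - κ) ≤
      2 * κ * ∑ k ∈ Finset.range n, (eulerLam q k - κ) := by
    apply mul_le_mul_of_nonneg_left _ (by linarith)
    apply Finset.sum_le_sum_of_subset_of_nonneg
    · exact Finset.range_subset_range.2 (Nat.div_le_self n 2)
    · intro i _ _
      exact sub_nonneg.2 (kappa_le_lam hq0 hq1 i)
  refine le_trans step1 ?_
  rw [hpo]
  calc 2 * κ * ∑ k ∈ Finset.range n, (eulerLam q k - κ)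
      = ∑ k ∈ Finset.Icc 1 n,
        (κ * (eulerLam q (k - 1) - κ) + κ * (eulerLam q (n - k) - κ)) := by
        rw [Finset.sum_add_distrib, hsum1, hsum2, ← Finset.mul_sum]
        ring
    _ ≤ _ := Finset.sum_le_sum key


/-- For all `0 < q < 1` and every integer `n ≥ 2`, with `H = ⌊n/2⌋`,
`b_n(q) ≥ 2κ(q)·Σ_{k=0}^{H-1}(λ_k(q) - κ(q))`; consequently the limit
`b(q) = lim_{n→∞} b_n(q)` satisfies `b(q) ≥ 2κ(q)·Σ_{k=0}^∞ (λ_k(q) - κ(q))`. -/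
theorem postOffset_ge_partial (q : ℝ) (hq0 : 0 < q) (hq1 : q < 1) :
    (∀ n : ℕ, 2 ≤ n →
      2 * eulerKappa q * ∑ k ∈ Finset.range (n / 2), (eulerLam q k - eulerKappa q) ≤
        postOffset q n) ∧
    ∀ L : ℝ, Filter.Tendsto (fun n : ℕ => postOffset q n) Filter.atTop (nhds L) →
      2 * eulerKappa q * ∑' k : ℕ, (eulerLam q k - eulerKappa q) ≤ L := by
  refine ⟨fun n hn => part1 hq0 hq1 n hn, fun L hL => ?_⟩
  have hs := summable_lam_sub hq0 hq1
  have h1 : Tendsto (fun n : ℕ => ∑ k ∈ Finset.range n, (eulerLam q k - eulerKappa q))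
      atTop (nhds (∑' k : ℕ, (eulerLam q k - eulerKappa q))) :=
    hs.hasSum.tendsto_sum_nat
  have h2 : Tendsto (fun n : ℕ => n / 2) atTop atTop :=
    tendsto_atTop_atTop.2 fun b => ⟨2 * b, fun n hn => by omega⟩
  have h3 : Tendsto (fun n : ℕ =>
      2 * eulerKappa q * ∑ k ∈ Finset.range (n / 2), (eulerLam q k - eulerKappa q))
      atTop (nhds (2 * eulerKappa q * ∑' k : ℕ, (eulerLam q k - eulerKappa q))) :=
    tendsto_const_nhds.mul (h1.comp h2)
  exact le_of_tendsto_of_tendsto h3 hL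
    (eventually_atTop.2 ⟨2, fun n hn => part1 hq0 hq1 n hn⟩)
end

section
/- Let 0<p<1 and q=1−p. In a random graph order on the positive integers ℕ with parameter p, for every k≥2 and every 1≤i<k, the conditional probability that k−i ≺_ω k, given that k−j ≺_ω k for all 1≤j<i, equals 1−q^i. -/
open MeasureTheory ProbabilityTheory

/-- The index set of potential edges of a random graph order on `ℕ = {1, 2, 3, …}`:
pairs `(i, j)` with `1 ≤ i < j`. -/
abbrev GraphOrderEdge : Type := {ij : ℕ × ℕ // 1 ≤ ij.1 ∧ ij.1 < ij.2}

/-- The random graph order relation `≺_ω`: the transitive closure of the relation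
`{(i, j) : 1 ≤ i < j and ω(i, j) = 1}`. -/
def GraphOrderRel (ω : GraphOrderEdge → Bool) (a b : ℕ) : Prop :=
  Relation.TransGen (fun x y => ∃ h : 1 ≤ x ∧ x < y, ω ⟨(x, y), h⟩ = true) a b

/-- `μ` is the law of a random graph order on `ℕ = {1, 2, 3, …}` with parameter `p`:
a probability measure on edge configurations whose coordinates are independent
Bernoulli(`p`) random variables. -/
structure IsRandomGraphOrderMeasure (μ : Measure (GraphOrderEdge → Bool)) (p : ℝ)
    (hp : 0 < p ∧ p < 1) : Prop where
  isProb : IsProbabilityMeasure μ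
  indep : iIndepFun (fun e ω => ω e) μ
  bernoulli : ∀ e : GraphOrderEdge, μ.map (fun ω => ω e) =
    (PMF.bernoulli (Real.toNNReal p) (Real.toNNReal_le_one.mpr hp.2.le)).toMeasure

lemma graphOrderRel_lt {ω : GraphOrderEdge → Bool} {a b : ℕ} (h : GraphOrderRel ω a b) :
    a < b := by
  induction h with
  | single h => exact h.1.2
  | tail _ h ih => exact ih.trans h.choose.2

lemma graphOrderRel_congr {ω ω' : GraphOrderEdge → Bool} {lo b : ℕ}
    (hagree : ∀ e : GraphOrderEdge, lo ≤ e.val.1 → e.val.2 ≤ b → ω e = ω' e)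
    {a : ℕ} (h : GraphOrderRel ω a b) : lo ≤ a → GraphOrderRel ω' a b := by
  induction h using Relation.TransGen.head_induction_on with
  | single h' =>
      intro ha
      obtain ⟨hab, he⟩ := h'
      exact Relation.TransGen.single ⟨hab, (hagree ⟨(_, _), hab⟩ ha le_rfl) ▸ he⟩
  | head h' hcb ihp =>
      intro ha
      obtain ⟨hac, he⟩ := h'
      have hcb' := ihp (le_trans ha hac.2.le)
      have hclt := graphOrderRel_lt hcb
      exact Relation.TransGen.head ⟨hac, (hagree ⟨(_, _), hac⟩ ha hclt.le) ▸ he⟩ hcb'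

lemma reflTransGen_le {ω : GraphOrderEdge → Bool} {a b : ℕ}
    (h : Relation.ReflTransGen (fun x y => ∃ h : 1 ≤ x ∧ x < y, ω ⟨(x, y), h⟩ = true) a b) :
    a ≤ b := by
  induction h with
  | refl => exact le_rfl
  | tail _ h ih => exact ih.trans h.choose.2.le

/-- In a random graph order on `ℕ = {1, 2, …}` with parameter `0 < p < 1` and `q = 1 - p`,
for every `k ≥ 2` and `1 ≤ i < k`, the conditional probability that `k - i ≺_ω k`,
given that `k - j ≺_ω k` for all `1 ≤ j < i`, equals `1 - q^i`. -/
theorem cond_prob_rel_eq (p q : ℝ) (hp : 0 < p ∧ p < 1) (hq : q = 1 - p)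
    (μ : Measure (GraphOrderEdge → Bool)) (hμ : IsRandomGraphOrderMeasure μ p hp)
    (k i : ℕ) (hk : 2 ≤ k) (hi1 : 1 ≤ i) (hik : i < k) :
    μ ({ω | GraphOrderRel ω (k - i) k} ∩
        {ω | ∀ j : ℕ, 1 ≤ j → j < i → GraphOrderRel ω (k - j) k}) /
      μ {ω | ∀ j : ℕ, 1 ≤ j → j < i → GraphOrderRel ω (k - j) k} =
      ENNReal.ofReal (1 - q ^ i) := by
  classical
  haveI := hμ.isProb
  set n := k - i with hn
  have hn1 : 1 ≤ n := by omega
  have hni : n + i = k := by omega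
  set B : Set (GraphOrderEdge → Bool) :=
    {ω | ∀ j : ℕ, 1 ≤ j → j < i → GraphOrderRel ω (k - j) k} with hBdef
  set S : Finset GraphOrderEdge :=
    Finset.subtype _ (({n} : Finset ℕ) ×ˢ Finset.Icc (n + 1) k) with hSdef
  set T : Finset GraphOrderEdge :=
    Finset.subtype _ ((Finset.Icc (n + 1) k) ×ˢ Finset.Icc (n + 1) k) with hTdef
  have hmemS : ∀ e : GraphOrderEdge, e ∈ S ↔ e.val.1 = n ∧ n + 1 ≤ e.val.2 ∧ e.val.2 ≤ k := by
    intro e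
    rw [hSdef, Finset.mem_subtype, Finset.mem_product, Finset.mem_singleton, Finset.mem_Icc]
  have hmemT : ∀ e : GraphOrderEdge, e ∈ T ↔
      n + 1 ≤ e.val.1 ∧ e.val.1 ≤ k ∧ n + 1 ≤ e.val.2 ∧ e.val.2 ≤ k := by
    intro e
    rw [hTdef, Finset.mem_subtype, Finset.mem_product, Finset.mem_Icc, Finset.mem_Icc]
    tauto
  set πS : (GraphOrderEdge → Bool) → (↥S → Bool) := fun a e => a ↑e with hπSdef
  set πT : (GraphOrderEdge → Bool) → (↥T → Bool) := fun a e => a ↑e with hπTdef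
  set sC : Set (↥S → Bool) := {g | ∃ e : ↥S, g e = true} with hsCdef
  -- B is saturated for πT
  have hBsat : B = πT ⁻¹' (πT '' B) := by
    apply Set.Subset.antisymm (Set.subset_preimage_image _ _)
    rintro ω ⟨ω', hω'B, heq⟩
    intro j hj1 hji
    have hagree : ∀ e : GraphOrderEdge, n + 1 ≤ e.val.1 → e.val.2 ≤ k → ω' e = ω e := by
      intro e h1 h2
      have heT : e ∈ T := by
        rw [hmemT]
        exact ⟨h1, le_trans e.2.2.le h2, by omega, h2⟩
      exact congrFun heq ⟨e, heT⟩
    exact graphOrderRel_congr hagree (hω'B j hj1 hji) (by omega)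
  -- the key combinatorial identity
  have hCB : {ω | GraphOrderRel ω n k} ∩ B = πS ⁻¹' sC ∩ B := by
    ext ω
    simp only [Set.mem_inter_iff, Set.mem_setOf_eq, Set.mem_preimage, hsCdef, Set.mem_setOf_eq]
    constructor
    · rintro ⟨hA, hB⟩
      refine ⟨?_, hB⟩
      rw [GraphOrderRel, Relation.TransGen.head'_iff] at hA
      obtain ⟨m, ⟨hnm, he⟩, hrest⟩ := hA
      have hmk : m ≤ k := reflTransGen_le hrest
      have hmemm : (⟨(n, m), hnm⟩ : GraphOrderEdge) ∈ S := by
        rw [hmemS]; exact ⟨rfl, hnm.2, hmk⟩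
      exact ⟨⟨⟨(n, m), hnm⟩, hmemm⟩, he⟩
    · rintro ⟨⟨⟨⟨⟨x, m⟩, hxm⟩, hmem⟩, hge⟩, hB⟩
      refine ⟨?_, hB⟩
      rw [hmemS] at hmem
      obtain ⟨hx, hm1, hm2⟩ := hmem
      have hx' : x = n := hx
      have hm1' : n + 1 ≤ m := hm1
      have hm2' : m ≤ k := hm2
      subst hx'
      by_cases hmk : m = k
      · subst hmk
        exact Relation.TransGen.single ⟨hxm, hge⟩
      · have hB' := hB (k - m) (by omega) (by omega)
        have hkm : k - (k - m) = m := by omega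
        rw [hkm] at hB'
        exact Relation.TransGen.head ⟨hxm, hge⟩ hB'
  -- independence
  have hST : Disjoint S T := by
    rw [Finset.disjoint_left]
    intro e heS heT
    rw [hmemS] at heS; rw [hmemT] at heT
    omega
  have hindep : IndepFun πS πT μ :=
    hμ.indep.indepFun_finset S T hST (fun e => measurable_pi_apply e)
  have hmsC : MeasurableSet sC := (Set.toFinite sC).measurableSet
  have hmtB : MeasurableSet (πT '' B) := (Set.toFinite _).measurableSet
  have hmul : μ (πS ⁻¹' sC ∩ πT ⁻¹' (πT '' B)) = μ (πS ⁻¹' sC) * μ (πT ⁻¹' (πT '' B)) :=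
    hindep.measure_inter_preimage_eq_mul sC (πT '' B) hmsC hmtB
  -- single coordinate probabilities
  have hsingle : ∀ (e : GraphOrderEdge) (b : Bool),
      μ ((fun ω => ω e) ⁻¹' {b}) = (PMF.bernoulli (Real.toNNReal p)
        (Real.toNNReal_le_one.mpr hp.2.le)) b := by
    intro e b
    rw [← Measure.map_apply (measurable_pi_apply e) (measurableSet_singleton b),
      hμ.bernoulli e, PMF.toMeasure_apply_singleton _ _ (measurableSet_singleton b)]
  have hq0 : 0 ≤ q := by rw [hq]; linarith [hp.2]
  have hfalse : ∀ e : GraphOrderEdge,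
      μ ((fun ω => ω e) ⁻¹' {false}) = ENNReal.ofReal q := by
    intro e
    rw [hsingle e false, PMF.bernoulli_apply, hq,
      ENNReal.ofReal_sub _ hp.1.le, ENNReal.ofReal_one]
    rfl
  have htrue : ∀ e : GraphOrderEdge,
      μ ((fun ω => ω e) ⁻¹' {true}) = ENNReal.ofReal p := by
    intro e
    rw [hsingle e true, PMF.bernoulli_apply]
    rfl
  -- card of S
  have hcardS : S.card = i := by
    rw [hSdef, Finset.card_subtype, Finset.filter_true_of_mem, Finset.card_product,
      Finset.card_singleton, Nat.card_Icc, one_mul]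
    · omega
    · intro x hx
      rw [Finset.mem_product, Finset.mem_singleton, Finset.mem_Icc] at hx
      exact ⟨by omega, by omega⟩
  -- measure of C
  have hCcompl : (πS ⁻¹' sC)ᶜ = ⋂ e ∈ S, (fun ω => ω e) ⁻¹' {false} := by
    ext ω
    simp only [Set.mem_compl_iff, Set.mem_preimage, hsCdef, Set.mem_setOf_eq, not_exists,
      Set.mem_iInter, Set.mem_singleton_iff]
    constructor
    · intro h e he
      simpa [hπSdef, Bool.not_eq_true] using h ⟨e, he⟩
    · intro h e
      simp [hπSdef, h e.1 e.2]
  have hComplVal : μ ((πS ⁻¹' sC)ᶜ) = ENNReal.ofReal q ^ i := by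
    rw [hCcompl, hμ.indep.measure_inter_preimage_eq_mul S
      (sets := fun _ => ({false} : Set Bool)) (fun _ _ => measurableSet_singleton _)]
    rw [Finset.prod_congr rfl (fun e _ => hfalse e), Finset.prod_const, hcardS]
  have hmC : MeasurableSet (πS ⁻¹' sC) :=
    hmsC.preimage (measurable_pi_lambda _ (fun e => measurable_pi_apply _))
  have hCval : μ (πS ⁻¹' sC) = ENNReal.ofReal (1 - q ^ i) := by
    have h2 := prob_compl_eq_one_sub (μ := μ) hmC.compl
    rw [compl_compl, hComplVal] at h2
    rw [h2, ← ENNReal.ofReal_pow hq0, ← ENNReal.ofReal_one,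
      ← ENNReal.ofReal_sub _ (pow_nonneg hq0 i)]
  -- μ B ≠ 0
  have hB0 : μ B ≠ 0 := by
    set S' : Finset GraphOrderEdge :=
      Finset.subtype _ ((Finset.Icc (n + 1) (k - 1)) ×ˢ ({k} : Finset ℕ)) with hS'def
    have hDB : (⋂ e ∈ S', (fun ω => ω e) ⁻¹' {true}) ⊆ B := by
      intro ω hω j hj1 hji
      have hjk : 1 ≤ k - j ∧ k - j < k := ⟨by omega, by omega⟩
      have hmem : (⟨(k - j, k), hjk⟩ : GraphOrderEdge) ∈ S' := by
        simp [hS'def, Finset.mem_subtype, Finset.mem_product, Finset.mem_Icc]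
        omega
      have := Set.mem_iInter₂.mp hω _ hmem
      exact Relation.TransGen.single ⟨hjk, this⟩
    have hDval : μ (⋂ e ∈ S', (fun ω => ω e) ⁻¹' {true}) = ENNReal.ofReal p ^ S'.card := by
      rw [hμ.indep.measure_inter_preimage_eq_mul S'
        (sets := fun _ => ({true} : Set Bool)) (fun _ _ => measurableSet_singleton _)]
      rw [Finset.prod_congr rfl (fun e _ => htrue e), Finset.prod_const]
    intro h0
    have hle := measure_mono (μ := μ) hDB
    rw [h0, hDval] at hle
    have : ENNReal.ofReal p ^ S'.card ≠ 0 :=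
      pow_ne_zero _ (by simp [ENNReal.ofReal_eq_zero, not_le, hp.1])
    exact this (le_antisymm hle (zero_le (a := _)))
  have hBtop : μ B ≠ ⊤ := measure_ne_top μ B
  -- assemble
  calc μ ({ω | GraphOrderRel ω n k} ∩ B) / μ B
      = μ (πS ⁻¹' sC ∩ πT ⁻¹' (πT '' B)) / μ (πT ⁻¹' (πT '' B)) := by rw [hCB, ← hBsat]
    _ = μ (πS ⁻¹' sC) * μ (πT ⁻¹' (πT '' B)) / μ (πT ⁻¹' (πT '' B)) := by rw [hmul]
    _ = μ (πS ⁻¹' sC) := by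
        rw [mul_div_assoc, ENNReal.div_self (by rw [← hBsat]; exact hB0)
          (by rw [← hBsat]; exact hBtop), mul_one]
    _ = ENNReal.ofReal (1 - q ^ i) := hCval
end
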